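/- In the Steihaug–Toint truncated conjugate gradient method applied to the quadratic model m(ξ) = φ(x) + ⟨g, ξ⟩ + (1/2)⟨Hξ, ξ⟩ on an inner product space, starting from ξ₀ = 0: the model values are monotonically nonincreasing along the iterates (m(ξ₀) ≥ m(ξ₁) ≥ … ≥ m(η_k)) and the norms of the iterates are monotonically nondecreasing (‖ξ₀‖ ≤ ‖ξ₁‖ ≤ … ≤ ‖ξ_j‖ ≤ ‖η_k‖ ≤ ‖H⁻¹(−g)‖ when H is positive definite). -/

import Mathlib

open scoped RealInnerProductSpace

set_option maxHeartbeats 2000000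

/-- Steihaug–Toint truncated CG on the quadratic model
`m ξ = φx + ⟨g, ξ⟩ + (1/2)⟨Hξ, ξ⟩`, starting from `ξ₀ = 0`: the model values are
monotonically nonincreasing along the iterates (including a final truncated step
`η = ξ_N + t • δ_N` with `0 ≤ t ≤ α_N`), and the norms of the iterates are
monotonically nondecreasing, bounded above by `‖H⁻¹(−g)‖` when `H` is positive
definite. -/
theorem stmt_4
    {V : Type*} [NormedAddCommGroup V] [InnerProductSpace ℝ V]
    (φx : ℝ) (g : V) (H : V →L[ℝ] V)
    (hsym : ∀ u v : V, ⟪H u, v⟫ = ⟪u, H v⟫)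
    (m : V → ℝ) (hm : ∀ ξ, m ξ = φx + ⟪g, ξ⟫ + (1/2) * ⟪H ξ, ξ⟫)
    (ξ r δ : ℕ → V) (α β : ℕ → ℝ)
    (hξ0 : ξ 0 = 0) (hr0 : r 0 = g) (hδ0 : δ 0 = -g)
    (hα : ∀ j, α j = ⟪r j, r j⟫ / ⟪δ j, H (δ j)⟫)
    (hξs : ∀ j, ξ (j+1) = ξ j + α j • δ j)
    (hrs : ∀ j, r (j+1) = r j + α j • H (δ j))
    (hβ : ∀ j, β (j+1) = ⟪r (j+1), r (j+1)⟫ / ⟪r j, r j⟫)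
    (hδs : ∀ j, δ (j+1) = -(r (j+1)) + β (j+1) • δ j)
    (N : ℕ)
    (hcurv : ∀ j ≤ N, 0 < ⟪δ j, H (δ j)⟫)
    (hposdef : ∀ v : V, v ≠ 0 → 0 < ⟪v, H v⟫)
    (Hinv : V →L[ℝ] V) (hHinv : ∀ v, Hinv (H v) = v ∧ H (Hinv v) = v) :
    (∀ j < N, m (ξ (j+1)) ≤ m (ξ j) ∧ ‖ξ j‖ ≤ ‖ξ (j+1)‖) ∧
    (∀ t : ℝ, 0 ≤ t → t ≤ α N →
      m (ξ N + t • δ N) ≤ m (ξ N) ∧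
      ‖ξ N‖ ≤ ‖ξ N + t • δ N‖ ∧
      ‖ξ N + t • δ N‖ ≤ ‖Hinv (-g)‖) := by
  classical
  have ipos : ∀ x : V, x ≠ 0 → 0 < ⟪x, x⟫ := fun x hx => by
    rw [real_inner_self_eq_norm_sq]; exact pow_pos (norm_pos_iff.mpr hx) 2
  have dnonneg : ∀ v : V, 0 ≤ ⟪v, H v⟫ := by
    intro v; rcases eq_or_ne v 0 with h | h
    · simp [h]
    · exact (hposdef v h).le
  have αnonneg : ∀ j, 0 ≤ α j := fun j => by
    rw [hα]; exact div_nonneg real_inner_self_nonneg (dnonneg _)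
  have βnonneg : ∀ j, 0 ≤ β (j+1) := fun j => by
    rw [hβ]; exact div_nonneg real_inner_self_nonneg real_inner_self_nonneg
  have hrξ : ∀ j, r j = g + H (ξ j) := by
    intro j; induction j with
    | zero => simp [hr0, hξ0]
    | succ n ih => rw [hrs, hξs, ih]; simp [map_add, map_smul]; abel
  have hmdiff : ∀ j (t : ℝ), m (ξ j + t • δ j)
      = m (ξ j) + t * ⟪r j, δ j⟫ + t^2/2 * ⟪δ j, H (δ j)⟫ := by
    intro j t
    have h1 : ⟪H (δ j), ξ j⟫ = ⟪H (ξ j), δ j⟫ := by rw [hsym, real_inner_comm]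
    have h2 : ⟪H (δ j), δ j⟫ = ⟪δ j, H (δ j)⟫ := hsym _ _
    rw [hm, hm, hrξ j]
    simp only [map_add, map_smul, inner_add_left, inner_add_right,
      real_inner_smul_left, real_inner_smul_right, h1, h2]
    ring
  have normsq : ∀ j (t : ℝ), ‖ξ j + t • δ j‖^2
      = ‖ξ j‖^2 + 2*(t*⟪ξ j, δ j⟫) + t^2*‖δ j‖^2 := by
    intro j t
    rw [norm_add_sq_real, real_inner_smul_right, norm_smul, Real.norm_eq_abs,
      mul_pow, sq_abs]
  have sqle : ∀ a b : V, ‖a‖^2 ≤ ‖b‖^2 → ‖a‖ ≤ ‖b‖ := by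
    intro a b h
    nlinarith [norm_nonneg a, norm_nonneg b]
  have inv : ∀ j, (∀ k, k < j → r k ≠ 0) →
      (⟪r j, δ j⟫ = -⟪r j, r j⟫) ∧ (∀ i, i < j → ⟪r j, δ i⟫ = 0) ∧
      (∀ i, i < j → ⟪r j, r i⟫ = 0) ∧ (∀ i, i < j → ⟪δ j, H (δ i)⟫ = 0) := by
    intro j
    induction j using Nat.strong_induction_on with
    | _ j IH =>
      rcases j with _ | n
      · intro _
        refine ⟨by simp [hr0, hδ0, inner_neg_right], ?_, ?_, ?_⟩ <;>
          exact fun i hi => absurd hi (by omega)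
      · intro h
        have hkn : ∀ k, k < n → r k ≠ 0 := fun k hk => h k (by omega)
        have hrn : r n ≠ 0 := h n (by omega)
        obtain ⟨e1, eA, eB, eC⟩ := IH n (by omega) hkn
        -- regularity facts for i ≤ n
        have hreg : ∀ i, i ≤ n → δ i ≠ 0 ∧ 0 < α i := by
          intro i hi
          have hri : r i ≠ 0 := h i (by omega)
          obtain ⟨e1i, -, -, -⟩ := IH i (by omega) (fun k hk => h k (by omega))
          have hδi : δ i ≠ 0 := by
            intro h0; apply hri
            rw [h0, inner_zero_right] at e1i
            have : ⟪r i, r i⟫ = 0 := by linarith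
            exact inner_self_eq_zero.mp this
          exact ⟨hδi, by rw [hα]; exact div_pos (ipos _ hri) (hposdef _ hδi)⟩
        have hδn : δ n ≠ 0 := (hreg n le_rfl).1
        have hαpos : 0 < α n := (hreg n le_rfl).2
        have dpos : 0 < ⟪δ n, H (δ n)⟫ := hposdef _ hδn
        have Rpos : 0 < ⟪r n, r n⟫ := ipos _ hrn
        have hαd : α n * ⟪δ n, H (δ n)⟫ = ⟪r n, r n⟫ := by
          rw [hα]; field_simp
        have hHδ : ∀ i, i ≤ n → H (δ i) = (α i)⁻¹ • (r (i+1) - r i) := by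
          intro i hi
          have hαi : α i ≠ 0 := ne_of_gt (hreg i hi).2
          rw [hrs i, add_sub_cancel_left, smul_smul, inv_mul_cancel₀ hαi, one_smul]
        have eA' : ∀ i, i < n+1 → ⟪r (n+1), δ i⟫ = 0 := by
          intro i hi
          rcases Nat.lt_succ_iff_lt_or_eq.mp hi with hi' | heq
          · rw [hrs, inner_add_left, real_inner_smul_left, hsym, eA i hi', eC i hi']
            ring
          · rw [heq, hrs, inner_add_left, real_inner_smul_left, e1, hsym]
            linarith [hαd]
        have eB' : ∀ i, i < n+1 → ⟪r (n+1), r i⟫ = 0 := by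
          intro i hi
          rcases i with _ | i'
          · have h0 : r 0 = -δ 0 := by rw [hr0, hδ0, neg_neg]
            rw [h0, inner_neg_right, eA' 0 (by omega), neg_zero]
          · have h0 : r (i'+1) = β (i'+1) • δ i' - δ (i'+1) := by
              rw [hδs i']; abel
            rw [h0, inner_sub_right, real_inner_smul_right, eA' i' (by omega),
              eA' (i'+1) hi, mul_zero, sub_zero]
        have e1' : ⟪r (n+1), δ (n+1)⟫ = -⟪r (n+1), r (n+1)⟫ := by
          rw [hδs, inner_add_right, inner_neg_right, real_inner_smul_right,
            eA' n (by omega), mul_zero, add_zero]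
        have eC' : ∀ i, i < n+1 → ⟪δ (n+1), H (δ i)⟫ = 0 := by
          intro i hi
          rcases Nat.lt_succ_iff_lt_or_eq.mp hi with hi' | heq
          · rw [hδs, inner_add_left, inner_neg_left, real_inner_smul_left,
              eC i hi', mul_zero, add_zero, hHδ i (by omega),
              real_inner_smul_right, inner_sub_right, eB' (i+1) (by omega),
              eB' i (by omega)]
            simp
          · rw [heq, hδs, inner_add_left, inner_neg_left, real_inner_smul_left]
            have h1 : ⟪r (n+1), H (δ n)⟫ = (α n)⁻¹ * ⟪r (n+1), r (n+1)⟫ := by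
              rw [hHδ n le_rfl, real_inner_smul_right, inner_sub_right,
                eB' n (by omega), sub_zero]
            have h2 : β (n+1) * ⟪δ n, H (δ n)⟫ = (α n)⁻¹ * ⟪r (n+1), r (n+1)⟫ := by
              rw [hβ]
              field_simp [ne_of_gt Rpos, ne_of_gt hαpos]
              rw [← hαd]; ring
            rw [h1, h2]; ring
        exact ⟨e1', eA', eB', eC'⟩
  have ξsum : ∀ j, ξ j = ∑ i ∈ Finset.range j, α i • δ i := by
    intro j; induction j with
    | zero => simp [hξ0]
    | succ n ih => rw [hξs, ih, Finset.sum_range_succ]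
  have rξ : ∀ j, (∀ k, k < j → r k ≠ 0) → ⟪r j, ξ j⟫ = 0 := by
    intro j h; rw [ξsum j, inner_sum]
    refine Finset.sum_eq_zero fun i hi => ?_
    rw [real_inner_smul_right, (inv j h).2.1 i (Finset.mem_range.mp hi), mul_zero]
  have ξδ : ∀ j, (∀ k, k < j → r k ≠ 0) → 0 ≤ ⟪ξ j, δ j⟫ := by
    intro j
    induction j with
    | zero => intro _; simp [hξ0]
    | succ n ih =>
      intro h
      have hn : ∀ k, k < n → r k ≠ 0 := fun k hk => h k (by omega)
      have h1 : ⟪ξ (n+1), r (n+1)⟫ = 0 := by rw [real_inner_comm]; exact rξ (n+1) h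
      rw [hδs, inner_add_right, inner_neg_right, h1, neg_zero, zero_add,
        real_inner_smul_right]
      have h2 : ⟪ξ (n+1), δ n⟫ = ⟪ξ n, δ n⟫ + α n * ⟪δ n, δ n⟫ := by
        rw [hξs, inner_add_left, real_inner_smul_left]
      rw [h2]
      have h3 := ih hn
      have h4 := αnonneg n
      have h5 : (0:ℝ) ≤ ⟪δ n, δ n⟫ := real_inner_self_nonneg
      exact mul_nonneg (βnonneg n) (by nlinarith)
  have seg : ∀ j, (∀ k, k < j → r k ≠ 0) → ∀ t : ℝ, 0 ≤ t → t ≤ α j →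
      m (ξ j + t • δ j) ≤ m (ξ j) ∧ ‖ξ j‖ ≤ ‖ξ j + t • δ j‖ ∧
      ‖ξ j + t • δ j‖ ≤ ‖ξ j + α j • δ j‖ := by
    intro j h t ht htα
    have e1 := (inv j h).1
    have hξδ := ξδ j h
    have hd := dnonneg (δ j)
    have hR : (0:ℝ) ≤ ⟪r j, r j⟫ := real_inner_self_nonneg
    have hαn := αnonneg j
    refine ⟨?_, ?_, ?_⟩
    · rw [hmdiff]
      rcases eq_or_lt_of_le hd with hd0 | hd0
      · have hα0 : α j = 0 := by rw [hα, ← hd0, div_zero]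
        have ht0 : t = 0 := le_antisymm (hα0 ▸ htα) ht
        simp [ht0]
      · have hαd : α j * ⟪δ j, H (δ j)⟫ = ⟪r j, r j⟫ := by rw [hα]; field_simp
        rw [e1]
        nlinarith [mul_le_mul_of_nonneg_right (mul_le_mul_of_nonneg_left htα ht) hd,
          mul_nonneg ht hR]
    · apply sqle; rw [normsq]
      nlinarith [mul_nonneg ht hξδ, mul_nonneg (mul_nonneg ht ht) (sq_nonneg ‖δ j‖)]
    · apply sqle; rw [normsq, normsq]
      nlinarith [mul_le_mul_of_nonneg_right htα hξδ,
        mul_le_mul_of_nonneg_right (mul_le_mul_of_nonneg_left htα ht) (sq_nonneg ‖δ j‖),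
        mul_le_mul_of_nonneg_right (mul_le_mul_of_nonneg_right htα hαn) (sq_nonneg ‖δ j‖)]
  have rneN : ∀ k, k < N → r k ≠ 0 := by
    intro k hk hk0
    have hα0 : α k = 0 := by rw [hα, hk0]; simp
    have hr1 : r (k+1) = 0 := by rw [hrs, hα0, hk0]; simp
    have hβ0 : β (k+1) = 0 := by rw [hβ, hr1]; simp
    have hδ1 : δ (k+1) = 0 := by rw [hδs, hr1, hβ0]; simp
    have hc := hcurv (k+1) (by omega)
    rw [hδ1] at hc; simp at hc
  refine ⟨fun j hj => ?_, fun t ht htα => ?_⟩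
  · have h := fun k (hk : k < j) => rneN k (by omega)
    have s := seg j h (α j) (αnonneg j) le_rfl
    rw [← hξs j] at s
    exact ⟨s.1, s.2.1⟩
  · have s := seg N rneN t ht htα
    refine ⟨s.1, s.2.1, ?_⟩
    have step1 : ‖ξ N + t • δ N‖ ≤ ‖ξ (N+1)‖ := by rw [hξs N]; exact s.2.2
    refine step1.trans ?_
    have hstar : ∀ J, r J = 0 → ξ J = Hinv (-g) := by
      intro J hJ
      have h := hrξ J
      rw [hJ] at h
      have h1 : H (ξ J) = -g := by
        rw [eq_neg_iff_add_eq_zero, add_comm]; exact h.symm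
      rw [← h1, (hHinv _).1]
    have hfreeze : ∀ J, r J = 0 → r (J+1) = 0 ∧ ξ (J+1) = ξ J := by
      intro J hJ
      have hα0 : α J = 0 := by rw [hα, hJ]; simp
      exact ⟨by rw [hrs, hα0, hJ]; simp, by rw [hξs, hα0]; simp⟩
    by_cases hex : ∃ J, r J = 0
    · have hJspec : r (Nat.find hex) = 0 := Nat.find_spec hex
      set J := Nat.find hex with hJdef
      have hmin : ∀ k, k < J → r k ≠ 0 := fun k hk => Nat.find_min hex hk
      have hfrozen : ∀ n, J ≤ n → ξ n = ξ J ∧ r n = 0 := by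
        intro n hn
        induction n, hn using Nat.le_induction with
        | base => exact ⟨rfl, hJspec⟩
        | succ n hn ih =>
          obtain ⟨hξn, hrn⟩ := ih
          obtain ⟨h1, h2⟩ := hfreeze n hrn
          exact ⟨h2.trans hξn, h1⟩
      rcases le_or_gt (N+1) J with hle | hlt
      · have mono : ∀ n, N+1 ≤ n → n ≤ J → ‖ξ (N+1)‖ ≤ ‖ξ n‖ := by
          intro n hn
          induction n, hn using Nat.le_induction with
          | base => intro _; exact le_rfl
          | succ n hn ih =>
            intro hnJ
            refine (ih (by omega)).trans ?_
            have s := seg n (fun k hk => hmin k (by omega)) (α n) (αnonneg n) le_rfl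
            rw [hξs n]; exact s.2.1
        have h := mono J hle le_rfl
        rwa [hstar J hJspec] at h
      · have h := (hfrozen (N+1) (by omega)).1
        rw [h, hstar J hJspec]
    · push_neg at hex
      have hall : ∀ j, ∀ k, k < j → r k ≠ 0 := fun j k _ => hex k
      have facts : ∀ j, δ j ≠ 0 ∧ 0 < ⟪δ j, H (δ j)⟫ ∧ 0 < α j ∧
          α j * ⟪δ j, H (δ j)⟫ = ⟪r j, r j⟫ := by
        intro j
        have e1 := (inv j (hall j)).1
        have hδj : δ j ≠ 0 := by
          intro h0; apply hex j
          rw [h0, inner_zero_right] at e1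
          have : ⟪r j, r j⟫ = 0 := by linarith
          exact inner_self_eq_zero.mp this
        have dpos := hposdef _ hδj
        refine ⟨hδj, dpos, ?_, ?_⟩
        · rw [hα]; exact div_pos (ipos _ (hex j)) dpos
        · rw [hα]; field_simp
      have hg : g ≠ 0 := by rw [← hr0]; exact hex 0
      have hCpos : 0 < ‖Hinv‖ := by
        have hne : Hinv ≠ 0 := by
          intro h0; apply hg
          have h1 := (hHinv g).1
          rw [h0] at h1; simpa using h1.symm
        exact norm_pos_iff.mpr hne
      have hBsym : ∀ u w : V, ⟪u, Hinv w⟫ = ⟪Hinv u, w⟫ := by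
        intro u w
        conv_lhs => rw [← (hHinv u).2]
        rw [hsym, (hHinv w).2]
      have coerc : ∀ v : V, ‖v‖^2 ≤ ‖Hinv‖ * ⟪v, H v⟫ := by
        intro v
        rcases eq_or_ne v 0 with rfl | hv
        · simp
        · have key : ∀ x : ℝ, 0 ≤ ⟪v, H v⟫ * (x*x) + (2*‖v‖^2) * x + ⟪v, Hinv v⟫ := by
            intro x
            have hBpos : 0 ≤ ⟪v + x • H v, Hinv (v + x • H v)⟫ := by
              set u := v + x • H v
              have h0 : u = H (Hinv u) := ((hHinv u).2).symm
              calc (0:ℝ) ≤ ⟪Hinv u, H (Hinv u)⟫ := dnonneg _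
                _ = ⟪u, Hinv u⟫ := by rw [← hsym, (hHinv u).2]
            have expand : ⟪v + x • H v, Hinv (v + x • H v)⟫
                = ⟪v, H v⟫ * (x*x) + (2*‖v‖^2) * x + ⟪v, Hinv v⟫ := by
              rw [map_add, map_smul, (hHinv v).1]
              rw [inner_add_left, inner_add_right, inner_add_right,
                real_inner_smul_left, real_inner_smul_left,
                real_inner_smul_right, real_inner_smul_right]
              have h1 : ⟪H v, Hinv v⟫ = ⟪v, v⟫ := by
                rw [hBsym, (hHinv v).1]
              have h2 : ⟪H v, v⟫ = ⟪v, H v⟫ := real_inner_comm _ _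
              rw [h1, h2, real_inner_self_eq_norm_sq]
              ring
            rw [← expand]; exact hBpos
          have hdisc := discrim_le_zero key
          rw [discrim] at hdisc
          have hcs : ⟪v, Hinv v⟫ ≤ ‖Hinv‖ * ‖v‖^2 := by
            calc ⟪v, Hinv v⟫ ≤ ‖v‖ * ‖Hinv v‖ := real_inner_le_norm _ _
              _ ≤ ‖v‖ * (‖Hinv‖ * ‖v‖) :=
                mul_le_mul_of_nonneg_left (Hinv.le_opNorm v) (norm_nonneg v)
              _ = ‖Hinv‖ * ‖v‖^2 := by ring
          have hv2 : 0 < ‖v‖^2 := pow_pos (norm_pos_iff.mpr hv) 2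
          have hHv : 0 ≤ ⟪v, H v⟫ := dnonneg v
          nlinarith [mul_le_mul_of_nonneg_left hcs hHv]
      have mlb : ∀ v : V, φx - ‖Hinv‖ * ‖g‖^2/2 ≤ m v := by
        intro v
        rw [hm]
        have h1 : -(‖g‖*‖v‖) ≤ ⟪g, v⟫ := by
          have ha := abs_real_inner_le_norm g v
          have := neg_abs_le ⟪g, v⟫
          linarith
        have h2 : ‖v‖^2 ≤ ‖Hinv‖ * ⟪H v, v⟫ := by
          rw [real_inner_comm]; exact coerc v
        have gen : ∀ C γ s I P : ℝ, 0 < C → -(γ*s) ≤ I → s^2 ≤ C*P →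
            φx - C*γ^2/2 ≤ φx + I + 1/2*P := by
          intro C γ s I P hC hI hP
          nlinarith [sq_nonneg (s - C*γ), mul_pos hC hC]
        exact gen ‖Hinv‖ ‖g‖ ‖v‖ ⟪g, v⟫ ⟪H v, v⟫ hCpos h1 h2
      have hHpos : 0 < ‖H‖ := by
        have hne : H ≠ 0 := by
          intro h0; apply hg
          have h1 := (hHinv g).2
          rw [h0] at h1; simpa using h1.symm
        exact norm_pos_iff.mpr hne
      have D2 : ∀ j, ⟪δ j, H (δ j)⟫ ≤ ⟪r j, H (r j)⟫ := by
        intro j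
        rcases j with _ | n
        · rw [hδ0, ← hr0]; simp
        · obtain ⟨hδn, dpos, hαpos, hαd⟩ := facts n
          have Rpos := ipos _ (hex n)
          have hB := (inv (n+1) (hall _)).2.2.1 n (by omega)
          have hHδn : H (δ n) = (α n)⁻¹ • (r (n+1) - r n) := by
            rw [hrs n, add_sub_cancel_left, smul_smul,
              inv_mul_cancel₀ (ne_of_gt hαpos), one_smul]
          have hL : ⟪r (n+1), H (δ n)⟫ = (α n)⁻¹ * ⟪r (n+1), r (n+1)⟫ := by
            conv_lhs => rw [hHδn]
            rw [real_inner_smul_right, inner_sub_right, hB, sub_zero]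
          have key : ⟪r (n+1), H (δ n)⟫ = β (n+1) * ⟪δ n, H (δ n)⟫ := by
            rw [hL, hβ]
            field_simp [ne_of_gt Rpos, ne_of_gt hαpos]
            rw [← hαd]; ring
          have hc : ⟪δ n, H (r (n+1))⟫ = ⟪r (n+1), H (δ n)⟫ := by
            rw [← hsym, real_inner_comm]
          have expand : ⟪δ (n+1), H (δ (n+1))⟫
              = ⟪r (n+1), H (r (n+1))⟫ - 2*(β (n+1) * ⟪r (n+1), H (δ n)⟫)
                + β (n+1)^2 * ⟪δ n, H (δ n)⟫ := by
            rw [hδs n, map_add, map_neg, map_smul]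
            rw [inner_add_left, inner_add_right, inner_add_right,
              inner_neg_left, inner_neg_left, inner_neg_right, inner_neg_right,
              real_inner_smul_left, real_inner_smul_left,
              real_inner_smul_right, real_inner_smul_right, hc]
            ring
          rw [expand, key]
          nlinarith [mul_nonneg (sq_nonneg (β (n+1))) dpos.le]
      have dec : ∀ j, ⟪r j, r j⟫ ≤ 2*‖H‖*(m (ξ j) - m (ξ (j+1))) := by
        intro j
        obtain ⟨hδj, dpos, hαpos, hαd⟩ := facts j
        have e1 := (inv j (hall j)).1
        have hmj : m (ξ (j+1)) = m (ξ j) - α j/2 * ⟪r j, r j⟫ := by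
          rw [hξs j, hmdiff j (α j), e1]
          have h2 : (α j)^2/2 * ⟪δ j, H (δ j)⟫ = α j/2 * ⟪r j, r j⟫ := by
            rw [← hαd]; ring
          linarith [h2]
        have hbound : ⟪r j, H (r j)⟫ ≤ ‖H‖ * ⟪r j, r j⟫ := by
          calc ⟪r j, H (r j)⟫ ≤ ‖r j‖ * ‖H (r j)‖ := real_inner_le_norm _ _
            _ ≤ ‖r j‖ * (‖H‖ * ‖r j‖) :=
              mul_le_mul_of_nonneg_left (H.le_opNorm _) (norm_nonneg _)
            _ = ‖H‖ * ⟪r j, r j⟫ := by rw [real_inner_self_eq_norm_sq]; ring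
        have hdb : ⟪δ j, H (δ j)⟫ ≤ ‖H‖ * ⟪r j, r j⟫ := (D2 j).trans hbound
        rw [hmj]
        nlinarith [mul_le_mul_of_nonneg_left hdb hαpos.le, hαd]
      set f : ℕ → ℝ := fun j => m (ξ j) with hf
      have fant : Antitone f := by
        apply antitone_nat_of_succ_le
        intro n
        have h1 := dec n
        have h2 := ipos _ (hex n)
        have h3 : 0 < 2*‖H‖ := by positivity
        simp only [hf]
        nlinarith
      have fbdd : BddBelow (Set.range f) :=
        ⟨φx - ‖Hinv‖ * ‖g‖^2/2, by rintro x ⟨j, rfl⟩; exact mlb _⟩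
      have hconv := tendsto_atTop_ciInf fant fbdd
      have hconv' : Filter.Tendsto (fun j => f (j+1)) Filter.atTop (nhds (⨅ i, f i)) :=
        hconv.comp (Filter.tendsto_add_atTop_nat 1)
      have hdiff : Filter.Tendsto (fun j => 2*‖H‖*(f j - f (j+1))) Filter.atTop (nhds 0) := by
        have h0 : Filter.Tendsto (fun j => f j - f (j+1)) Filter.atTop (nhds 0) := by
          simpa using hconv.sub hconv'
        simpa using h0.const_mul (2*‖H‖)
      have hRten : Filter.Tendsto (fun j => ⟪r j, r j⟫) Filter.atTop (nhds 0) :=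
        squeeze_zero (fun j => real_inner_self_nonneg) (fun j => dec j) hdiff
      have hrn : Filter.Tendsto (fun j => ‖r j‖) Filter.atTop (nhds 0) := by
        have heq : (fun j => ‖r j‖) = fun j => Real.sqrt ⟪r j, r j⟫ :=
          funext fun j => norm_eq_sqrt_real_inner _
        rw [heq]
        have h0 := (Real.continuous_sqrt.tendsto 0).comp hRten
        simpa [Function.comp_def] using h0
      have hdiffeq : ∀ j, ξ j - Hinv (-g) = Hinv (r j) := by
        intro j
        have h2 : r j - g = H (ξ j) := by rw [hrξ j]; abel
        have h1 : Hinv (r j - g) = ξ j := by rw [h2, (hHinv _).1]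
        rw [← h1, map_sub, map_neg]
        abel
      have hξten : Filter.Tendsto (fun j => ‖ξ j‖) Filter.atTop (nhds ‖Hinv (-g)‖) := by
        have h0 : Filter.Tendsto (fun j => ξ j) Filter.atTop (nhds (Hinv (-g))) := by
          rw [tendsto_iff_norm_sub_tendsto_zero]
          refine squeeze_zero (g := fun j => ‖Hinv‖ * ‖r j‖) (fun j => norm_nonneg _) (fun j => ?_) ?_
          · exact le_of_eq_of_le (by rw [hdiffeq j]) (Hinv.le_opNorm _)
          · simpa using hrn.const_mul ‖Hinv‖
        exact h0.norm
      have monoξ : Monotone (fun j => ‖ξ j‖) := by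
        apply monotone_nat_of_le_succ
        intro n
        have s := seg n (hall n) (α n) (αnonneg n) le_rfl
        rw [hξs n]; exact s.2.1
      exact monoξ.ge_of_tendsto hξten (N+1)
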